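/- arXiv:2502.03267 — 2 statements merged into one kernel-verified Lean document; each statement's English description precedes it below -/
import Mathlib

section
/- Let n ≥ 1 and suppose f ∈ nL¹(ℝⁿ, H̃^n_∞) is Lebesgue measurable. Then limsup_{r→0⁺} (1/H̃^n_∞(B(x,r))) ∫_{B(x,r)} |f(y) − f(x)| dH̃^n_∞(y) = 0 for H̃^n_∞-almost every x ∈ ℝⁿ; and if moreover f is nonnegative, then f(x) = limsup_{r→0⁺} (1/H̃^n_∞(B(x,r))) ∫_{B(x,r)} f(y) dH̃^n_∞(y) for H̃^n_∞-almost every x ∈ ℝⁿ. -/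
open MeasureTheory Set Metric Filter Topology
open scoped ENNReal

noncomputable section

/-- Euclidean space `ℝⁿ`. -/
abbrev En (n : ℕ) : Type := EuclideanSpace ℝ (Fin n)

/-- The half-open dyadic cube `2^k (m + [0,1)ⁿ)`, `k : ℤ`, `m : ℤⁿ`. -/
def dyadicCube (n : ℕ) (k : ℤ) (m : Fin n → ℤ) : Set (En n) :=
  {x | ∀ i, (m i : ℝ) * 2 ^ k ≤ x i ∧ x i < ((m i : ℝ) + 1) * 2 ^ k}

/-- The `δ`-dimensional dyadic Hausdorff content `H̃^δ_∞`: the infimum of `Σ ℓ(Q_i)^δ`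
over all countable collections of dyadic cubes whose union's interior covers `E`. -/
def dyadicContent (n : ℕ) (δ : ℝ) (E : Set (En n)) : ℝ≥0∞ :=
  ⨅ (c : ℕ → ℤ × (Fin n → ℤ))
    (_ : E ⊆ interior (⋃ i, dyadicCube n (c i).1 (c i).2)),
    ∑' i, ENNReal.ofReal (((2 : ℝ) ^ (c i).1) ^ δ)

/-- The Choquet integral `∫_Ω f dH̃^δ_∞ := ∫_0^∞ H̃^δ_∞({x ∈ Ω : f x > t}) dt`
of a `[0,∞]`-valued function over `Ω ⊆ ℝⁿ`. -/
def choquetIntegral (n : ℕ) (δ : ℝ) (Ω : Set (En n)) (f : En n → ℝ≥0∞) : ℝ≥0∞ :=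
  ∫⁻ t in Ioi (0 : ℝ), dyadicContent n δ {x | x ∈ Ω ∧ ENNReal.ofReal t < f x}

/-- The Choquet integral `∫_Ω |f| dH̃^δ_∞` of a real-valued function. -/
def choquetIntegralAbs (n : ℕ) (δ : ℝ) (Ω : Set (En n)) (f : En n → ℝ) : ℝ≥0∞ :=
  choquetIntegral n δ Ω (fun x => ENNReal.ofReal |f x|)

/-- The Choquet integral `∫_Ω |f| dH̃^δ_∞` of an extended-real-valued function. -/
def choquetIntegralEAbs (n : ℕ) (δ : ℝ) (Ω : Set (En n)) (f : En n → EReal) : ℝ≥0∞ :=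
  choquetIntegral n δ Ω (fun x => (f x).abs)

/-- The ball average `f^δ_{B(x,r)} := (1/H̃^δ_∞(B(x,r))) ∫_{B(x,r)} f dH̃^δ_∞`. -/
def ballAvg (n : ℕ) (δ : ℝ) (f : En n → ℝ≥0∞) (x : En n) (r : ℝ) : ℝ≥0∞ :=
  choquetIntegral n δ (ball x r) f / dyadicContent n δ (ball x r)

/-- The Hausdorff-content centred maximal function `M^δ f(x)`. -/
def maximal (n : ℕ) (δ : ℝ) (f : En n → ℝ≥0∞) (x : En n) : ℝ≥0∞ :=
  ⨆ (r : ℝ) (_ : 0 < r), ballAvg n δ f x r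

/-- `f^δ_*(x) := limsup_{r→0⁺} (1/H̃^δ_∞(B(x,r))) ∫_{B(x,r)} |f(y) − f(x)| dH̃^δ_∞(y)`. -/
def lebDev (n : ℕ) (δ : ℝ) (f : En n → ℝ) (x : En n) : ℝ≥0∞ :=
  limsup (fun r : ℝ => choquetIntegralAbs n δ (ball x r) (fun y => f y - f x) /
    dyadicContent n δ (ball x r)) (𝓝[>] (0 : ℝ))

/-- `limsup_{r→0⁺} f^δ_{B(x,r)}` of the ball averages. -/
def limsupAvg (n : ℕ) (δ : ℝ) (f : En n → ℝ≥0∞) (x : En n) : ℝ≥0∞ :=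
  limsup (fun r : ℝ => ballAvg n δ f x r) (𝓝[>] (0 : ℝ))

lemma dyadicCube_eq_preimage (n : ℕ) (k : ℤ) (m : Fin n → ℤ) :
    dyadicCube n k m = (MeasurableEquiv.toLp 2 (Fin n → ℝ)).symm ⁻¹'
      (univ.pi fun i => Ico ((m i : ℝ) * 2 ^ k) (((m i : ℝ) + 1) * 2 ^ k)) := by
  ext x
  simp [dyadicCube, MeasurableEquiv.coe_toLp_symm, Set.mem_pi]

lemma measurableSet_dyadicCube (n : ℕ) (k : ℤ) (m : Fin n → ℤ) :
    MeasurableSet (dyadicCube n k m) := by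
  rw [dyadicCube_eq_preimage]
  exact (MeasurableEquiv.toLp 2 (Fin n → ℝ)).symm.measurable
    (MeasurableSet.univ_pi fun i => measurableSet_Ico)

lemma volume_dyadicCube (n : ℕ) (k : ℤ) (m : Fin n → ℤ) :
    volume (dyadicCube n k m) = ENNReal.ofReal (((2:ℝ) ^ k) ^ (n:ℝ)) := by
  rw [dyadicCube_eq_preimage,
    (EuclideanSpace.volume_preserving_symm_measurableEquiv_toLp (Fin n)).measure_preimage
      ((MeasurableSet.univ_pi fun i => measurableSet_Ico).nullMeasurableSet)]
  rw [volume_pi_pi]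
  have h2 : (0:ℝ) < 2 ^ k := by positivity
  have : ∀ i : Fin n, volume (Ico ((m i : ℝ) * 2 ^ k) (((m i : ℝ) + 1) * 2 ^ k))
      = ENNReal.ofReal ((2:ℝ)^k) := by
    intro i; rw [Real.volume_Ico]; ring_nf
  simp only [this, Finset.prod_const, Finset.card_univ, Fintype.card_fin]
  rw [Real.rpow_natCast, ← ENNReal.ofReal_pow h2.le]

def mOf (n : ℕ) (k : ℤ) (x : En n) : Fin n → ℤ := fun i => ⌊x i / 2 ^ k⌋

lemma mem_dyadicCube_iff {n : ℕ} {k : ℤ} {m : Fin n → ℤ} {x : En n} :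
    x ∈ dyadicCube n k m ↔ m = mOf n k x := by
  have h2 : (0:ℝ) < 2 ^ k := by positivity
  constructor
  · intro hx
    funext i
    obtain ⟨h1, h3⟩ := hx i
    rw [eq_comm, mOf, Int.floor_eq_iff]
    constructor
    · rw [le_div_iff₀ h2]; linarith
    · rw [div_lt_iff₀ h2]; linarith
  · rintro rfl
    intro i
    constructor
    · have := Int.floor_le (x i / 2 ^ k)
      rw [le_div_iff₀ h2] at this
      calc ((mOf n k x i : ℝ)) * 2 ^ k ≤ (x i / 2^k) * 2^k := by
            apply mul_le_mul_of_nonneg_right (Int.floor_le _) h2.le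
        _ = x i := by field_simp
    · have := Int.lt_floor_add_one (x i / 2 ^ k)
      calc x i = (x i / 2^k) * 2^k := by field_simp
        _ < ((mOf n k x i : ℝ) + 1) * 2 ^ k := by
            apply mul_lt_mul_of_pos_right _ h2
            exact_mod_cast this

lemma mem_dyadicCube_mOf (n : ℕ) (k : ℤ) (x : En n) : x ∈ dyadicCube n k (mOf n k x) :=
  mem_dyadicCube_iff.2 rfl

lemma dyadicCube_subset_parent (n : ℕ) (k : ℤ) (m : Fin n → ℤ) :
    dyadicCube n k m ⊆ dyadicCube n (k+1) (fun i => (m i).fdiv 2) := by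
  intro x hx i
  obtain ⟨h1, h2⟩ := hx i
  have hq : (2:ℤ) * ((m i).fdiv 2) ≤ m i ∧ m i ≤ 2 * ((m i).fdiv 2) + 1 := by
    have := Int.fdiv_mul_add_fmod (m i) 2
    have h0 : 0 ≤ (m i).fmod 2 := Int.fmod_nonneg_of_pos (m i) (by norm_num)
    have h1 : (m i).fmod 2 < 2 := Int.fmod_lt_of_pos (m i) (by norm_num)
    omega
  have e : (2:ℝ) ^ (k+1) = 2 * 2 ^ k := by rw [zpow_add_one₀]; ring; norm_num
  have c1 : ((((m i).fdiv 2 : ℤ) : ℝ)) * 2 ^ (k+1) ≤ (m i : ℝ) * 2 ^ k := by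
    rw [e]
    have : ((2:ℝ) * ((m i).fdiv 2 : ℤ)) ≤ (m i : ℝ) := by exact_mod_cast hq.1
    nlinarith [ (by positivity : (0:ℝ) < (2:ℝ)^k) ]
  have c2 : ((m i : ℝ) + 1) * 2 ^ k ≤ ((((m i).fdiv 2 : ℤ) : ℝ) + 1) * 2 ^ (k+1) := by
    rw [e]
    have : ((m i : ℝ) + 1) ≤ 2 * (((m i).fdiv 2 : ℤ) : ℝ) + 2 := by
      have := hq.2; push_cast; exact_mod_cast by push_cast; linarith [ (by exact_mod_cast hq.2 : (m i :ℝ) ≤ 2 * (((m i).fdiv 2 : ℤ):ℝ) + 1) ]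
    nlinarith [ (by positivity : (0:ℝ) < (2:ℝ)^k) ]
  exact ⟨le_trans c1 h1, lt_of_lt_of_le h2 c2⟩

lemma mOf_succ {n : ℕ} {k : ℤ} (x : En n) :
    mOf n (k+1) x = fun i => ((mOf n k x) i).fdiv 2 := by
  have hx : x ∈ dyadicCube n (k+1) (fun i => ((mOf n k x) i).fdiv 2) :=
    dyadicCube_subset_parent n k _ (mem_dyadicCube_mOf n k x)
  exact (mem_dyadicCube_iff.1 hx).symm

lemma dyadicCube_mOf_mono {n : ℕ} {k k' : ℤ} (hk : k ≤ k') (x : En n) :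
    dyadicCube n k (mOf n k x) ⊆ dyadicCube n k' (mOf n k' x) := by
  refine Int.le_induction (motive := fun k' _ => dyadicCube n k (mOf n k x) ⊆ dyadicCube n k' (mOf n k' x))
    subset_rfl (fun k2 _ ih => ih.trans ?_) k' hk
  rw [mOf_succ x]
  exact dyadicCube_subset_parent n k2 _

lemma exists_small_cube {n : ℕ} (x : En n) {ε : ℝ} (hε : 0 < ε) :
    ∃ k : ℤ, dyadicCube n k (mOf n k x) ⊆ ball x ε ∧ k < 0 := by
  have hn : (0:ℝ) < Real.sqrt n + 1 := by positivity
  obtain ⟨j, hj⟩ := exists_pow_lt_of_lt_one (div_pos hε hn) (by norm_num : (1:ℝ)/2 < 1)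
  refine ⟨-(j+1), ?_, by omega⟩
  intro y hy
  have h2 : (0:ℝ) < (2:ℝ) ^ (-(j+1:ℤ)) := by positivity
  have hcoord : ∀ i, |y i - x i| < (2:ℝ) ^ (-(j+1:ℤ)) := by
    intro i
    obtain ⟨a1, a2⟩ := hy i
    obtain ⟨b1, b2⟩ := mem_dyadicCube_mOf n (-(j+1)) x i
    rw [abs_sub_lt_iff]
    constructor <;> nlinarith
  have hd : dist y x < ε := by
    rw [EuclideanSpace.dist_eq]
    have hb : ∀ i, dist (y i) (x i) ^ 2 ≤ ((2:ℝ) ^ (-(j+1:ℤ)))^2 := by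
      intro i
      have := (hcoord i).le
      rw [Real.dist_eq]
      nlinarith [abs_nonneg (y i - x i)]
    calc Real.sqrt (∑ i, dist (y i) (x i) ^ 2)
        ≤ Real.sqrt (n * ((2:ℝ) ^ (-(j+1:ℤ)))^2) := by
          apply Real.sqrt_le_sqrt
          calc (∑ i, dist (y i) (x i) ^ 2) ≤ ∑ _i : Fin n, ((2:ℝ) ^ (-(j+1:ℤ)))^2 :=
                Finset.sum_le_sum fun i _ => hb i
            _ = n * ((2:ℝ) ^ (-(j+1:ℤ)))^2 := by
                simp [Finset.sum_const]
      _ = Real.sqrt n * (2:ℝ) ^ (-(j+1:ℤ)) := by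
          rw [Real.sqrt_mul (by positivity), Real.sqrt_sq h2.le]
      _ < (Real.sqrt n + 1) * ((1/2:ℝ))^j := by
          have : (2:ℝ) ^ (-(j+1:ℤ)) ≤ (1/2:ℝ)^j := by
            rw [zpow_neg, one_div, inv_pow]
            apply inv_anti₀ (by positivity)
            rw [← zpow_natCast (2:ℝ) j]
            exact zpow_le_zpow_right₀ (by norm_num) (by omega)
          have h0 : (0:ℝ) < ((1/2:ℝ))^j := by positivity
          have hs : (0:ℝ) ≤ Real.sqrt n := Real.sqrt_nonneg _
          calc Real.sqrt n * (2:ℝ) ^ (-(j+1:ℤ)) ≤ Real.sqrt n * ((1/2:ℝ))^j := by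
                apply mul_le_mul_of_nonneg_left _ hs
                simpa using this
            _ < (Real.sqrt n + 1) * ((1/2:ℝ))^j := by nlinarith
      _ < ε := by
          calc (Real.sqrt n + 1) * ((1/2:ℝ))^j < (Real.sqrt n + 1) * (ε / (Real.sqrt n + 1)) := by
                apply mul_lt_mul_of_pos_left hj hn
            _ = ε := by field_simp
  simpa [mem_ball] using hd

lemma exists_maximal_cube {n : ℕ} (hn : 1 ≤ n) {U : Set (En n)} (hU : IsOpen U)
    (hvol : volume U < ⊤) {x : En n} (hx : x ∈ U) :
    ∃ k : ℤ, x ∈ dyadicCube n k (mOf n k x) ∧ dyadicCube n k (mOf n k x) ⊆ U ∧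
      ¬ (dyadicCube n (k+1) (fun i => ((mOf n k x) i).fdiv 2) ⊆ U) := by
  set S : ℤ → Prop := fun k => dyadicCube n k (mOf n k x) ⊆ U with hS
  have hne : ∃ k, S k := by
    obtain ⟨ε, hε, hball⟩ := Metric.isOpen_iff.1 hU x hx
    obtain ⟨k, hk, _⟩ := exists_small_cube x hε
    exact ⟨k, hk.trans hball⟩
  set R : ℝ := (volume U).toReal + 1 with hR
  have hbdd : ∃ b : ℤ, ∀ k : ℤ, S k → k ≤ b := by
    refine ⟨⌈R⌉, fun k hk => ?_⟩
    by_contra hlt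
    push_neg at hlt
    have hk0 : (0:ℤ) ≤ k := le_trans (by positivity : (0:ℤ) ≤ ⌈R⌉) hlt.le
    have h1 : (1:ℝ) ≤ (2:ℝ)^k := one_le_zpow₀ (by norm_num) hk0
    have hRk : R < (2:ℝ)^k := by
      have : (R:ℝ) ≤ ⌈R⌉ := Int.le_ceil R
      have h2 : ((⌈R⌉:ℤ):ℝ) < ((k:ℤ):ℝ) := by exact_mod_cast hlt
      have h3 : ((k:ℤ):ℝ) < (2:ℝ)^k := by
        calc ((k:ℤ):ℝ) < 2^(k.toNat) := by
              have := Nat.lt_two_pow_self (n := k.toNat)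
              calc ((k:ℤ):ℝ) ≤ (k.toNat : ℝ) := by
                    exact_mod_cast Int.self_le_toNat k
                _ < (2:ℝ)^(k.toNat) := by exact_mod_cast this
          _ = (2:ℝ)^k := by
              rw [← zpow_natCast (2:ℝ) k.toNat, Int.toNat_of_nonneg hk0]
      linarith
    have hvolcube : volume (dyadicCube n k (mOf n k x)) ≤ volume U := measure_mono hk
    rw [volume_dyadicCube] at hvolcube
    have hpow : R ≤ ((2:ℝ)^k)^(n:ℝ) := by
      rw [Real.rpow_natCast]
      calc R ≤ (2:ℝ)^k := hRk.le
        _ ≤ ((2:ℝ)^k)^n := le_self_pow₀ h1 (by omega)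
    have : ENNReal.ofReal R ≤ volume U := le_trans (ENNReal.ofReal_le_ofReal hpow) hvolcube
    have hRU : volume U < ENNReal.ofReal R := by
      rw [hR]
      calc volume U = ENNReal.ofReal (volume U).toReal := (ENNReal.ofReal_toReal hvol.ne).symm
        _ < ENNReal.ofReal ((volume U).toReal + 1) := by
            rw [ENNReal.ofReal_lt_ofReal_iff (by positivity)]
            linarith
    exact absurd (lt_of_le_of_lt this hRU) (lt_irrefl _)
  obtain ⟨k₀, ⟨hk₀S, hk₀max⟩⟩ := Int.exists_greatest_of_bdd
    (by obtain ⟨b, hb⟩ := hbdd; exact ⟨b, hb⟩) hne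
  refine ⟨k₀, mem_dyadicCube_mOf n k₀ x, hk₀S, fun hpar => ?_⟩
  have hxpar : x ∈ dyadicCube n (k₀+1) (fun i => ((mOf n k₀ x) i).fdiv 2) :=
    dyadicCube_subset_parent n k₀ _ (mem_dyadicCube_mOf n k₀ x)
  have heq : (fun i => ((mOf n k₀ x) i).fdiv 2) = mOf n (k₀+1) x := mem_dyadicCube_iff.1 hxpar
  have : S (k₀+1) := by rw [hS]; simpa [← heq] using hpar
  have := hk₀max _ this
  omega

def maximalCubes (n : ℕ) (U : Set (En n)) : Set (ℤ × (Fin n → ℤ)) :=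
  {p | dyadicCube n p.1 p.2 ⊆ U ∧ ¬ (dyadicCube n (p.1+1) (fun i => (p.2 i).fdiv 2) ⊆ U)}

lemma maximalCubes_cover {n : ℕ} (hn : 1 ≤ n) {U : Set (En n)} (hU : IsOpen U)
    (hvol : volume U < ⊤) : U ⊆ ⋃ p ∈ maximalCubes n U, dyadicCube n p.1 p.2 := by
  intro x hx
  obtain ⟨k, hxk, hsub, hpar⟩ := exists_maximal_cube hn hU hvol hx
  exact mem_biUnion (⟨hsub, hpar⟩ : (k, mOf n k x) ∈ maximalCubes n U) hxk

lemma maximalCubes_disjoint {n : ℕ} {U : Set (En n)} :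
    (maximalCubes n U).PairwiseDisjoint (fun p => dyadicCube n p.1 p.2) := by
  have key : ∀ p ∈ maximalCubes n U, ∀ q ∈ maximalCubes n U, p.1 ≤ q.1 → p ≠ q →
      ∀ z, z ∈ dyadicCube n p.1 p.2 → z ∉ dyadicCube n q.1 q.2 := by
    rintro ⟨k, m⟩ hp ⟨k', m'⟩ hq hkk hne z hz hz'
    have hm : m = mOf n k z := mem_dyadicCube_iff.1 hz
    have hm' : m' = mOf n k' z := mem_dyadicCube_iff.1 hz'
    rcases eq_or_lt_of_le hkk with h | h
    · exact hne (by subst h; simp [hm, hm'])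
    · -- k < k' : parent of (k,m) is contained in cube (k',m') ⊆ U
      have hzp : z ∈ dyadicCube n (k+1) (fun i => (m i).fdiv 2) :=
        dyadicCube_subset_parent n k m hz
      have hpeq : (fun i => (m i).fdiv 2) = mOf n (k+1) z := mem_dyadicCube_iff.1 hzp
      have hsub : dyadicCube n (k+1) (mOf n (k+1) z) ⊆ dyadicCube n k' (mOf n k' z) :=
        dyadicCube_mOf_mono (by omega) z
      apply hp.2
      rw [hpeq]
      exact hsub.trans (by rw [← hm']; exact hq.1)
  intro p hp q hq hne
  rcases le_total p.1 q.1 with h | h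
  · exact Set.disjoint_left.2 fun z hz hz' => key p hp q hq h hne z hz hz'
  · exact Set.disjoint_right.2 fun z hz hz' => key q hq p hp h (Ne.symm hne) z hz hz'

lemma volume_le_dyadicContent (n : ℕ) (E : Set (En n)) :
    volume E ≤ dyadicContent n (n : ℝ) E := by
  refine le_iInf fun c => le_iInf fun hc => ?_
  calc volume E ≤ volume (⋃ i, dyadicCube n (c i).1 (c i).2) :=
        measure_mono (hc.trans interior_subset)
    _ ≤ ∑' i, volume (dyadicCube n (c i).1 (c i).2) := measure_iUnion_le _
    _ = ∑' i, ENNReal.ofReal (((2 : ℝ) ^ (c i).1) ^ (n:ℝ)) := by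
        simp only [volume_dyadicCube]

lemma dyadicContent_le_volume {n : ℕ} (hn : 1 ≤ n) (E : Set (En n)) :
    dyadicContent n (n : ℝ) E ≤ volume E := by
  classical
  refine ENNReal.le_of_forall_pos_le_add fun ε hε hEtop => ?_
  set T := ℤ × (Fin n → ℤ)
  haveI : Encodable T := Encodable.ofCountable T
  -- choose an open superset U
  have hlt : volume E < volume E + (ε:ℝ≥0∞)/2 := by
    apply ENNReal.lt_add_right hEtop.ne
    simp [hε.ne']
  obtain ⟨U, hEU, hUopen, hUvol⟩ := Set.exists_isOpen_lt_of_lt E _ hlt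
  have hUtop : volume U < ⊤ := hUvol.trans_le le_top
  -- choose a small junk level L
  obtain ⟨j, hj⟩ := exists_pow_lt_of_lt_one
    (show (0:ℝ) < (ε:ℝ)/4 by positivity) (by norm_num : (1/2:ℝ) < 1)
  set L : ℤ := -j with hL
  have hL0 : L ≤ 0 := by omega
  set M := maximalCubes n U with hM
  set c : ℕ → T := fun i =>
    (Encodable.decode₂ T i).elim ((L - i, fun _ => 0) : T)
      (fun p => if p ∈ M then p else ((L - i, fun _ => 0) : T)) with hc
  have hcov : E ⊆ interior (⋃ i, dyadicCube n (c i).1 (c i).2) := by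
    have hU : U ⊆ ⋃ i, dyadicCube n (c i).1 (c i).2 := by
      intro x hx
      obtain ⟨p, hpM, hxp⟩ := by
        simpa only [mem_iUnion, exists_prop] using maximalCubes_cover hn hUopen hUtop hx
      refine mem_iUnion.2 ⟨Encodable.encode p, ?_⟩
      have : c (Encodable.encode p) = p := by
        simp [hc, Encodable.decode₂_encode, hpM, hM]
      rw [this]; exact hxp
    calc E ⊆ U := hEU
      _ = interior U := hUopen.interior_eq.symm
      _ ⊆ interior (⋃ i, dyadicCube n (c i).1 (c i).2) := interior_mono hU
  refine iInf_le_of_le c (iInf_le_of_le hcov ?_)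
  -- bound the sum
  set g : ℕ → ℝ≥0∞ := fun i =>
    (Encodable.decode₂ T i).elim 0
      (fun p => M.indicator (fun q => volume (dyadicCube n q.1 q.2)) p) with hg
  set b : ℕ → ℝ≥0∞ := fun i => ENNReal.ofReal (((2:ℝ) ^ (L - (i:ℤ))) ^ (n:ℝ)) with hb
  have hpt : ∀ i, ENNReal.ofReal (((2 : ℝ) ^ (c i).1) ^ (n:ℝ)) ≤ g i + b i := by
    intro i
    rcases hdec : Encodable.decode₂ T i with _ | p
    · simp only [hc, hg, hb, hdec, Option.elim]
      exact le_add_self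
    · simp only [hc, hg, hb, hdec, Option.elim]
      by_cases hpM : p ∈ M
      · simp only [hpM, if_true, Set.indicator_of_mem hpM, volume_dyadicCube]
        exact le_self_add
      · simp only [hpM, if_false, Set.indicator_of_notMem hpM]
        exact le_add_self
  have hgsum : ∑' i, g i = ∑' (p : M), volume (dyadicCube n (p:T).1 (p:T).2) := by
    have hsupp : Function.support g ⊆ Set.range (Encodable.encode : T → ℕ) := by
      intro i hi
      rcases hdec : Encodable.decode₂ T i with _ | p
      · exfalso; apply hi; simp [hg, hdec]
      · exact ⟨p, Encodable.decode₂_eq_some.1 hdec⟩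
    have henc : ∀ p : T, g (Encodable.encode p)
        = M.indicator (fun q => volume (dyadicCube n q.1 q.2)) p := by
      intro p; simp [hg, Encodable.decode₂_encode]
    calc ∑' i, g i = ∑' p : T, g (Encodable.encode p) :=
          (Encodable.encode_injective.tsum_eq hsupp).symm
      _ = ∑' p : T, M.indicator (fun q => volume (dyadicCube n q.1 q.2)) p := by
          simp only [henc]
      _ = ∑' (p : M), volume (dyadicCube n (p:T).1 (p:T).2) :=
          (tsum_subtype M _).symm
  have hgle : ∑' i, g i ≤ volume U := by
    rw [hgsum, ← measure_biUnion (Set.to_countable M) maximalCubes_disjoint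
      (fun p _ => measurableSet_dyadicCube n p.1 p.2)]
    apply measure_mono
    exact Set.iUnion₂_subset fun p hp => hp.1
  have hbsum : ∑' i, b i ≤ (ε:ℝ≥0∞)/2 := by
    have hbi : ∀ i : ℕ, b i = ENNReal.ofReal (((2:ℝ)^L)^(n:ℕ)) *
        (ENNReal.ofReal (((2:ℝ)⁻¹)^(n:ℕ)))^i := by
      intro i
      have h2 : (2:ℝ) ^ (L - (i:ℤ)) = 2^L * ((2:ℝ)⁻¹)^i := by
        rw [zpow_sub₀ (by norm_num : (2:ℝ) ≠ 0), zpow_natCast, div_eq_mul_inv, inv_pow]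
      have h1 : ((2:ℝ) ^ (L - (i:ℤ))) ^ (n:ℝ) = ((2:ℝ)^L)^(n:ℕ) * (((2:ℝ)⁻¹)^(n:ℕ))^i := by
        rw [Real.rpow_natCast, h2, mul_pow, pow_right_comm]
      show ENNReal.ofReal (((2:ℝ) ^ (L - (i:ℤ))) ^ (n:ℝ)) = _
      rw [h1, ENNReal.ofReal_mul (by positivity)]
      congr 1
      exact ENNReal.ofReal_pow (by positivity) i
    rw [tsum_congr hbi, ENNReal.tsum_mul_left, ENNReal.tsum_geometric]
    have hr : ENNReal.ofReal (((2:ℝ)⁻¹)^(n:ℕ)) ≤ 1/2 := by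
      calc ENNReal.ofReal (((2:ℝ)⁻¹)^(n:ℕ)) ≤ ENNReal.ofReal (((2:ℝ)⁻¹)^(1:ℕ)) := by
            apply ENNReal.ofReal_le_ofReal
            exact pow_le_pow_of_le_one (by norm_num) (by norm_num) hn
        _ = 1/2 := by rw [pow_one, ENNReal.ofReal_inv_of_pos (by norm_num)]; norm_num
    have hinv : (1 - ENNReal.ofReal (((2:ℝ)⁻¹)^(n:ℕ)))⁻¹ ≤ 2 := by
      rw [← inv_inv (2:ℝ≥0∞)]
      apply ENNReal.inv_le_inv.2
      calc (2:ℝ≥0∞)⁻¹ = 1 - 1/2 := by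
            rw [one_div, ENNReal.one_sub_inv_two]
        _ ≤ 1 - ENNReal.ofReal (((2:ℝ)⁻¹)^(n:ℕ)) := tsub_le_tsub_left hr 1
    have hhead : ENNReal.ofReal (((2:ℝ)^L)^(n:ℕ)) ≤ ENNReal.ofReal ((ε:ℝ)/4) := by
      apply ENNReal.ofReal_le_ofReal
      calc ((2:ℝ)^L)^(n:ℕ) ≤ ((2:ℝ)^L)^(1:ℕ) := by
            apply pow_le_pow_of_le_one (by positivity) _ hn
            calc (2:ℝ)^L ≤ (2:ℝ)^(0:ℤ) := zpow_le_zpow_right₀ (by norm_num) hL0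
              _ = 1 := by norm_num
        _ = (2:ℝ)^L := pow_one _
        _ = (1/2:ℝ)^j := by
            rw [hL, zpow_neg, one_div, inv_pow, zpow_natCast]
        _ ≤ (ε:ℝ)/4 := hj.le
    calc ENNReal.ofReal (((2:ℝ)^L)^(n:ℕ)) * (1 - ENNReal.ofReal (((2:ℝ)⁻¹)^(n:ℕ)))⁻¹
        ≤ ENNReal.ofReal ((ε:ℝ)/4) * 2 := mul_le_mul' hhead hinv
      _ = ENNReal.ofReal ((ε:ℝ)/4) * ENNReal.ofReal 2 := by norm_num
      _ = ENNReal.ofReal ((ε:ℝ)/4*2) := (ENNReal.ofReal_mul (by positivity)).symm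
      _ = ENNReal.ofReal ((ε:ℝ)/2) := by ring_nf
      _ ≤ (ε:ℝ≥0∞)/2 := by
          rw [ENNReal.ofReal_div_of_pos (by norm_num), ENNReal.ofReal_coe_nnreal]
          norm_num
  calc ∑' i, ENNReal.ofReal (((2 : ℝ) ^ (c i).1) ^ (n:ℝ))
      ≤ ∑' i, (g i + b i) := ENNReal.tsum_le_tsum hpt
    _ = ∑' i, g i + ∑' i, b i := ENNReal.tsum_add
    _ ≤ volume U + (ε:ℝ≥0∞)/2 := add_le_add hgle hbsum
    _ ≤ (volume E + (ε:ℝ≥0∞)/2) + (ε:ℝ≥0∞)/2 := add_le_add_left hUvol.le _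
    _ = volume E + ε := by
        rw [add_assoc, ENNReal.add_halves]

lemma dyadicContent_eq_volume {n : ℕ} (hn : 1 ≤ n) (E : Set (En n)) :
    dyadicContent n (n : ℝ) E = volume E :=
  le_antisymm (dyadicContent_le_volume hn E) (volume_le_dyadicContent n E)

lemma choquet_eq_lintegral {n : ℕ} (hn : 1 ≤ n) {Ω : Set (En n)} (hΩ : MeasurableSet Ω)
    {h : En n → ℝ} (h0 : ∀ x, 0 ≤ h x) (hm : AEMeasurable h (volume : Measure (En n))) :
    choquetIntegral n (n : ℝ) Ω (fun x => ENNReal.ofReal (h x))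
      = ∫⁻ x in Ω, ENNReal.ofReal (h x) ∂(volume : Measure (En n)) := by
  rw [lintegral_eq_lintegral_meas_lt ((volume : Measure (En n)).restrict Ω)
    (Filter.Eventually.of_forall h0) (hm.restrict)]
  rw [choquetIntegral]
  apply setLIntegral_congr_fun measurableSet_Ioi
  intro t ht
  beta_reduce
  rw [dyadicContent_eq_volume hn, Measure.restrict_apply' hΩ]
  congr 1
  ext x
  simp only [Set.mem_setOf_eq, Set.mem_inter_iff]
  rw [ENNReal.ofReal_lt_ofReal_iff_of_nonneg (le_of_lt ht)]
  tauto

/-- Lebesgue point properties for Lebesgue measurable functions in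
`nL¹(ℝⁿ, H̃^n_∞)`: `f^n_*(x) = 0` for `H̃^n_∞`-a.e. `x`, and if `f` is moreover
nonnegative, then `f(x) = limsup_{r→0⁺} f^n_{B(x,r)}` for `H̃^n_∞`-a.e. `x`. -/
theorem lebesgue_points_of_measurable (n : ℕ) (hn : 1 ≤ n) (f : En n → ℝ)
    (hf : choquetIntegralAbs n (n : ℝ) univ f < ⊤)
    (hmeas : NullMeasurable f (volume : Measure (En n))) :
    (∃ E : Set (En n), dyadicContent n (n : ℝ) E = 0 ∧
      ∀ x ∉ E, lebDev n (n : ℝ) f x = 0) ∧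
    ((∀ x, 0 ≤ f x) → ∃ E : Set (En n), dyadicContent n (n : ℝ) E = 0 ∧
      ∀ x ∉ E, ENNReal.ofReal (f x) =
        limsupAvg n (n : ℝ) (fun y => ENNReal.ofReal (f y)) x) := by
  haveI : Nonempty (Fin n) := ⟨⟨0, hn⟩⟩
  have hfm : AEMeasurable f (volume : Measure (En n)) := hmeas.aemeasurable
  -- integrability
  have hfin : ∫⁻ x, ENNReal.ofReal |f x| ∂(volume : Measure (En n)) < ⊤ := by
    have := choquet_eq_lintegral hn MeasurableSet.univ (fun x => abs_nonneg (f x)) (continuous_abs.measurable.comp_aemeasurable hfm)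
    rw [choquetIntegralAbs, this] at hf
    simpa using hf
  have hint : Integrable f (volume : Measure (En n)) := by
    refine ⟨hfm.aestronglyMeasurable, ?_⟩
    rw [hasFiniteIntegral_def]
    simpa only [Real.enorm_eq_ofReal_abs] using hfin
  -- Lebesgue differentiation
  have hae : ∀ᵐ x ∂(volume : Measure (En n)),
      Tendsto (fun r : ℝ => (∫⁻ y in closedBall x r, ‖f y - f x‖₊ ∂volume) /
        volume (closedBall x r)) (𝓝[>] (0:ℝ)) (𝓝 0) := by
    filter_upwards [(Besicovitch.vitaliFamily
      (volume : Measure (En n))).ae_tendsto_lintegral_enorm_sub_div_of_integrable hint] with x hx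
    exact hx.comp (Besicovitch.tendsto_filterAt _ x)
  set E : Set (En n) := {x | ¬ Tendsto (fun r : ℝ => (∫⁻ y in closedBall x r,
      ‖f y - f x‖₊ ∂volume) / volume (closedBall x r)) (𝓝[>] (0:ℝ)) (𝓝 0)} with hE
  have hEvol : volume E = 0 := hae
  have hEcont : dyadicContent n (n:ℝ) E = 0 := by
    rw [dyadicContent_eq_volume hn]; exact hEvol
  -- per-point rewriting of the averaged deviation
  have hdev : ∀ x : En n, ∀ r : ℝ,
      choquetIntegralAbs n (n:ℝ) (ball x r) (fun y => f y - f x) /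
        dyadicContent n (n:ℝ) (ball x r)
      = (∫⁻ y in ball x r, ‖f y - f x‖₊ ∂volume) / volume (ball x r) := by
    intro x r
    rw [choquetIntegralAbs, choquet_eq_lintegral hn measurableSet_ball
      (fun y => abs_nonneg _) (continuous_abs.measurable.comp_aemeasurable (hfm.sub_const (f x))), dyadicContent_eq_volume hn]
    congr 1
    apply lintegral_congr
    intro y
    exact (Real.enorm_eq_ofReal_abs _).symm
  have hballcb : ∀ (x : En n) (r : ℝ),
      (∫⁻ y in ball x r, ‖f y - f x‖₊ ∂volume) / volume (ball x r)
        ≤ (∫⁻ y in closedBall x r, ‖f y - f x‖₊ ∂volume) / volume (closedBall x r) := by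
    intro x r
    rw [Measure.addHaar_closedBall_eq_addHaar_ball]
    exact ENNReal.div_le_div_right
      (lintegral_mono_set ball_subset_closedBall) _
  -- the deviation tends to zero at good points
  have hdevlim : ∀ x ∉ E, Tendsto (fun r : ℝ => (∫⁻ y in ball x r,
      ‖f y - f x‖₊ ∂volume) / volume (ball x r)) (𝓝[>] (0:ℝ)) (𝓝 0) := by
    intro x hx
    rw [hE, Set.mem_setOf_eq, not_not] at hx
    refine tendsto_of_tendsto_of_tendsto_of_le_of_le tendsto_const_nhds hx
      (fun r => zero_le) (fun r => hballcb x r)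
  constructor
  · refine ⟨E, hEcont, fun x hx => ?_⟩
    have hlim := hdevlim x hx
    rw [lebDev]
    have : (fun r : ℝ => choquetIntegralAbs n (n:ℝ) (ball x r) (fun y => f y - f x) /
        dyadicContent n (n:ℝ) (ball x r))
        = fun r : ℝ => (∫⁻ y in ball x r, ‖f y - f x‖₊ ∂volume) / volume (ball x r) :=
      funext fun r => hdev x r
    rw [this]
    exact hlim.limsup_eq
  · intro hf0
    refine ⟨E, hEcont, fun x hx => ?_⟩
    have hG := hdevlim x hx
    set G : ℝ → ℝ≥0∞ := fun r => (∫⁻ y in ball x r, ‖f y - f x‖₊ ∂volume) /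
      volume (ball x r) with hGdef
    set A : ℝ → ℝ≥0∞ := fun r => ballAvg n (n:ℝ) (fun y => ENNReal.ofReal (f y)) x r with hA
    have hAeq : ∀ r : ℝ, A r = (∫⁻ y in ball x r, ENNReal.ofReal (f y) ∂volume) /
        volume (ball x r) := by
      intro r
      rw [hA]
      show choquetIntegral n (n:ℝ) (ball x r) (fun y => ENNReal.ofReal (f y)) /
        dyadicContent n (n:ℝ) (ball x r) = _
      rw [choquet_eq_lintegral hn measurableSet_ball hf0 hfm,
        dyadicContent_eq_volume hn]
    -- eventual two-sided bounds
    have hev : ∀ᶠ r in 𝓝[>] (0:ℝ),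
        A r ≤ ENNReal.ofReal (f x) + G r ∧ ENNReal.ofReal (f x) ≤ A r + G r := by
      filter_upwards [self_mem_nhdsWithin] with r (hr : 0 < r)
      have hv0 : volume (ball x r) ≠ 0 := (measure_ball_pos _ _ hr).ne'
      have hvtop : volume (ball x r) ≠ ⊤ := measure_ball_lt_top.ne
      have hnum : ∀ y, (‖f y - f x‖₊ : ℝ≥0∞) = ENNReal.ofReal |f y - f x| :=
        fun y => Real.enorm_eq_ofReal_abs _
      constructor
      · rw [hAeq r]
        have hle : (∫⁻ y in ball x r, ENNReal.ofReal (f y) ∂volume)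
            ≤ ENNReal.ofReal (f x) * volume (ball x r)
              + ∫⁻ y in ball x r, (‖f y - f x‖₊ : ℝ≥0∞) ∂volume := by
          have : ∀ y, ENNReal.ofReal (f y)
              ≤ ENNReal.ofReal (f x) + ENNReal.ofReal |f y - f x| := by
            intro y
            rw [← ENNReal.ofReal_add (hf0 x) (abs_nonneg _)]
            apply ENNReal.ofReal_le_ofReal
            have := abs_sub_abs_le_abs_sub (f y) (f x)
            have h2 := le_abs_self (f y - f x)
            linarith
          calc (∫⁻ y in ball x r, ENNReal.ofReal (f y) ∂volume)
              ≤ ∫⁻ y in ball x r, (ENNReal.ofReal (f x) + ENNReal.ofReal |f y - f x|) ∂volume :=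
                lintegral_mono fun y => this y
            _ = ENNReal.ofReal (f x) * volume (ball x r)
                + ∫⁻ y in ball x r, ENNReal.ofReal |f y - f x| ∂volume := by
                rw [lintegral_add_left measurable_const, setLIntegral_const]
            _ = _ := by
                congr 1
                apply lintegral_congr
                intro y
                rw [hnum y]
        calc (∫⁻ y in ball x r, ENNReal.ofReal (f y) ∂volume) / volume (ball x r)
            ≤ (ENNReal.ofReal (f x) * volume (ball x r)
              + ∫⁻ y in ball x r, (‖f y - f x‖₊ : ℝ≥0∞) ∂volume) / volume (ball x r) :=
              ENNReal.div_le_div_right hle _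
          _ = ENNReal.ofReal (f x) * volume (ball x r) / volume (ball x r) + G r := by
              rw [ENNReal.add_div]
          _ = ENNReal.ofReal (f x) + G r := by
              rw [mul_div_assoc, ENNReal.div_self hv0 hvtop, mul_one]
      · have hle : ENNReal.ofReal (f x) * volume (ball x r)
            ≤ (∫⁻ y in ball x r, ENNReal.ofReal (f y) ∂volume)
              + ∫⁻ y in ball x r, (‖f y - f x‖₊ : ℝ≥0∞) ∂volume := by
          have : ∀ y, ENNReal.ofReal (f x)
              ≤ ENNReal.ofReal (f y) + ENNReal.ofReal |f y - f x| := by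
            intro y
            rw [← ENNReal.ofReal_add (hf0 y) (abs_nonneg _)]
            apply ENNReal.ofReal_le_ofReal
            have h2 := neg_abs_le (f y - f x)
            linarith
          calc ENNReal.ofReal (f x) * volume (ball x r)
              = ∫⁻ _ in ball x r, ENNReal.ofReal (f x) ∂volume := by
                rw [setLIntegral_const]
            _ ≤ ∫⁻ y in ball x r, (ENNReal.ofReal (f y) + ENNReal.ofReal |f y - f x|) ∂volume :=
                lintegral_mono fun y => this y
            _ = (∫⁻ y in ball x r, ENNReal.ofReal (f y) ∂volume)
                + ∫⁻ y in ball x r, ENNReal.ofReal |f y - f x| ∂volume :=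
                lintegral_add_left' (hfm.ennreal_ofReal.restrict) _
            _ = _ := by
                congr 1
                apply lintegral_congr
                intro y
                rw [hnum y]
        calc ENNReal.ofReal (f x)
            = ENNReal.ofReal (f x) * volume (ball x r) / volume (ball x r) := by
              rw [mul_div_assoc, ENNReal.div_self hv0 hvtop, mul_one]
          _ ≤ ((∫⁻ y in ball x r, ENNReal.ofReal (f y) ∂volume)
              + ∫⁻ y in ball x r, (‖f y - f x‖₊ : ℝ≥0∞) ∂volume) / volume (ball x r) :=
              ENNReal.div_le_div_right hle _
          _ = A r + G r := by rw [ENNReal.add_div, hAeq r]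
    -- squeeze
    have hlow : Tendsto (fun r => ENNReal.ofReal (f x) - G r) (𝓝[>] (0:ℝ))
        (𝓝 (ENNReal.ofReal (f x))) := by
      have := ENNReal.Tendsto.sub
        (tendsto_const_nhds : Tendsto (fun _ : ℝ => ENNReal.ofReal (f x)) (𝓝[>] (0:ℝ))
          (𝓝 (ENNReal.ofReal (f x)))) hG (Or.inl ENNReal.ofReal_ne_top)
      simpa using this
    have hup : Tendsto (fun r => ENNReal.ofReal (f x) + G r) (𝓝[>] (0:ℝ))
        (𝓝 (ENNReal.ofReal (f x))) := by
      have := Filter.Tendsto.add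
        (tendsto_const_nhds : Tendsto (fun _ : ℝ => ENNReal.ofReal (f x)) (𝓝[>] (0:ℝ))
          (𝓝 (ENNReal.ofReal (f x)))) hG
      simpa using this
    have hAtend : Tendsto A (𝓝[>] (0:ℝ)) (𝓝 (ENNReal.ofReal (f x))) := by
      apply tendsto_of_tendsto_of_tendsto_of_le_of_le' hlow hup
      · filter_upwards [hev] with r hr
        exact tsub_le_iff_right.2 hr.2
      · filter_upwards [hev] with r hr
        exact hr.1
    rw [limsupAvg]
    exact (hAtend.limsup_eq).symm
end
end

section
/- Let n ≥ 1 and suppose f : ℝⁿ → [0, ∞] is a function such that ∫_B f dH̃^n_∞ < ∞ for every open ball B in ℝⁿ. Then f is Lebesgue measurable if and only if f(x) = limsup_{r→0⁺} (1/H̃^n_∞(B(x,r))) ∫_{B(x,r)} f(y) dH̃^n_∞(y) for H̃^n_∞-almost every x ∈ ℝⁿ. -/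
open MeasureTheory Set Metric Filter Topology
open scoped ENNReal

noncomputable section

namespace DC

variable {n : ℕ}

lemma two_zpow_pos (k : ℤ) : (0:ℝ) < 2 ^ k := zpow_pos two_pos k

/-- indices of the dyadic cube of scale `k` containing `x` -/
def mOf (k : ℤ) (x : En n) : Fin n → ℤ := fun i => ⌊x i / 2 ^ k⌋

lemma mem_iff {k : ℤ} {m : Fin n → ℤ} {x : En n} :
    x ∈ dyadicCube n k m ↔ ∀ i, m i = ⌊x i / 2 ^ k⌋ := by
  have h2 := two_zpow_pos k
  constructor
  · intro hx i
    obtain ⟨h1, h2'⟩ := hx i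
    rw [eq_comm, Int.floor_eq_iff]
    constructor
    · exact (le_div_iff₀ h2).2 (by linarith)
    · exact (div_lt_iff₀ h2).2 (by push_cast; linarith)
  · intro h i
    have h1 : (⌊x i / 2 ^ k⌋ : ℝ) ≤ x i / 2 ^ k := Int.floor_le _
    have h2' : x i / 2 ^ k < ⌊x i / 2 ^ k⌋ + 1 := Int.lt_floor_add_one _
    rw [h i]
    constructor
    · calc (⌊x i / 2 ^ k⌋ : ℝ) * 2 ^ k ≤ (x i / 2 ^ k) * 2 ^ k := by
            exact mul_le_mul_of_nonneg_right h1 h2.le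
        _ = x i := div_mul_cancel₀ _ h2.ne'
    · calc x i = (x i / 2 ^ k) * 2 ^ k := (div_mul_cancel₀ _ h2.ne').symm
        _ < ((⌊x i / 2 ^ k⌋ : ℝ) + 1) * 2 ^ k := by
            exact mul_lt_mul_of_pos_right h2' h2

lemma self_mem (k : ℤ) (x : En n) : x ∈ dyadicCube n k (mOf k x) :=
  mem_iff.2 fun _ => rfl

lemma eq_mOf_of_mem {k : ℤ} {m : Fin n → ℤ} {x : En n} (h : x ∈ dyadicCube n k m) :
    m = mOf k x := funext (mem_iff.1 h)

/-- nesting: intersecting dyadic cubes with `k ≤ k'` are nested -/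
lemma subset_of_inter {k k' : ℤ} {m m' : Fin n → ℤ} (hkk : k ≤ k')
    (h : (dyadicCube n k m ∩ dyadicCube n k' m').Nonempty) :
    dyadicCube n k m ⊆ dyadicCube n k' m' := by
  obtain ⟨x, hx, hx'⟩ := h
  intro y hy i
  obtain ⟨a1, a2⟩ := hx i
  obtain ⟨b1, b2⟩ := hx' i
  obtain ⟨c1, c2⟩ := hy i
  set d : ℕ := (k' - k).toNat with hd
  have hdd : (d : ℤ) = k' - k := Int.toNat_of_nonneg (by omega)
  have hpow : (2:ℝ) ^ k' = (2 ^ d : ℤ) * 2 ^ k := by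
    push_cast
    rw [← zpow_natCast (2:ℝ) d, ← zpow_add₀ (two_ne_zero), hdd]
    ring_nf
  have h2 := two_zpow_pos k
  -- integer inequalities
  have key1 : m' i * 2 ^ d ≤ m i := by
    have : (m' i * 2 ^ d : ℝ) * 2 ^ k < (m i + 1) * 2 ^ k := by
      calc (m' i * 2 ^ d : ℝ) * 2 ^ k = (m' i : ℝ) * 2 ^ k' := by rw [hpow]; push_cast; ring
        _ ≤ x i := b1
        _ < (m i + 1) * 2 ^ k := a2
    have := (mul_lt_mul_iff_of_pos_right h2).1 this
    exact_mod_cast Int.lt_add_one_iff.1 (by exact_mod_cast this)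
  have key2 : m i + 1 ≤ (m' i + 1) * 2 ^ d := by
    have : (m i : ℝ) * 2 ^ k < ((m' i + 1) * 2 ^ d : ℝ) * 2 ^ k := by
      calc (m i : ℝ) * 2 ^ k ≤ x i := a1
        _ < (m' i + 1) * 2 ^ k' := b2
        _ = ((m' i + 1) * 2 ^ d : ℝ) * 2 ^ k := by rw [hpow]; push_cast; ring
    have := (mul_lt_mul_iff_of_pos_right h2).1 this
    exact_mod_cast Int.add_one_le_iff.2 (by exact_mod_cast this)
  constructor
  · calc (m' i : ℝ) * 2 ^ k' = (m' i * 2 ^ d : ℝ) * 2 ^ k := by rw [hpow]; push_cast; ring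
      _ ≤ (m i : ℝ) * 2 ^ k := by
          apply mul_le_mul_of_nonneg_right _ h2.le
          exact_mod_cast key1
      _ ≤ y i := c1
  · calc y i < ((m i : ℝ) + 1) * 2 ^ k := c2
      _ ≤ ((m' i + 1) * 2 ^ d : ℝ) * 2 ^ k := by
          apply mul_le_mul_of_nonneg_right _ h2.le
          exact_mod_cast key2
      _ = ((m' i : ℝ) + 1) * 2 ^ k' := by rw [hpow]; push_cast; ring

lemma nonempty (k : ℤ) (m : Fin n → ℤ) : (dyadicCube n k m).Nonempty := by
  refine ⟨WithLp.toLp 2 (fun i => (m i : ℝ) * 2 ^ k : Fin n → ℝ), fun i => ?_⟩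
  have h2 := two_zpow_pos k
  refine ⟨le_refl _, ?_⟩
  simp only []
  nlinarith [h2]

end DC

namespace DC
variable {n : ℕ}

lemma cube_preimage (k : ℤ) (m : Fin n → ℤ) :
    dyadicCube n k m = (MeasurableEquiv.toLp 2 (Fin n → ℝ)).symm ⁻¹'
      (univ.pi fun i => Ico ((m i : ℝ) * 2 ^ k) (((m i : ℝ) + 1) * 2 ^ k)) := by
  ext x
  simp only [dyadicCube, mem_setOf_eq, mem_preimage, Set.mem_pi, mem_univ, forall_true_left,
    mem_Ico]
  exact Iff.rfl

lemma measurableSet_cube (k : ℤ) (m : Fin n → ℤ) : MeasurableSet (dyadicCube n k m) := by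
  rw [cube_preimage]
  exact (MeasurableEquiv.toLp 2 (Fin n → ℝ)).symm.measurable
    (MeasurableSet.univ_pi fun i => measurableSet_Ico)

lemma volume_cube (k : ℤ) (m : Fin n → ℤ) :
    volume (dyadicCube n k m) = ENNReal.ofReal (((2:ℝ) ^ k) ^ (n : ℝ)) := by
  rw [cube_preimage]
  rw [(EuclideanSpace.volume_preserving_symm_measurableEquiv_toLp (Fin n)).measure_preimage
    ((MeasurableSet.univ_pi fun i => measurableSet_Ico).nullMeasurableSet)]
  rw [volume_pi_pi]
  have : ∀ i : Fin n, volume (Ico ((m i : ℝ) * 2 ^ k) (((m i : ℝ) + 1) * 2 ^ k))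
      = ENNReal.ofReal ((2:ℝ) ^ k) := by
    intro i
    rw [Real.volume_Ico]
    congr 1
    ring
  simp only [this, Finset.prod_const, Finset.card_univ, Fintype.card_fin]
  rw [Real.rpow_natCast, ← ENNReal.ofReal_pow (two_zpow_pos k).le]

/-- small dyadic cubes around `x` are contained in small balls -/
lemma cube_subset_ball {x : En n} {ε : ℝ} (hε : 0 < ε) (k₀ : ℤ) :
    ∃ k ≤ k₀, dyadicCube n k (mOf k x) ⊆ ball x ε := by
  obtain ⟨j, hj⟩ : ∃ j : ℕ, ((n:ℝ)+1) * (2:ℝ) ^ (-(j:ℤ)) < ε := by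
    have h1 : Tendsto (fun j : ℕ => ((n:ℝ)+1) * (2:ℝ) ^ (-(j:ℤ))) atTop (𝓝 0) := by
      have := ENNReal.tendsto_pow_atTop_nhds_zero_of_lt_one (by norm_num : (2:ℝ≥0∞)⁻¹ < 1)
      have h2 : Tendsto (fun j : ℕ => ((1:ℝ)/2) ^ j) atTop (𝓝 0) :=
        tendsto_pow_atTop_nhds_zero_of_lt_one (by norm_num) (by norm_num)
      have h3 : (fun j : ℕ => ((n:ℝ)+1) * (2:ℝ) ^ (-(j:ℤ))) =
          (fun j : ℕ => ((n:ℝ)+1) * ((1:ℝ)/2) ^ j) := by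
        funext j
        rw [zpow_neg, zpow_natCast]
        rw [one_div, inv_pow]
      rw [h3]
      simpa using h2.const_mul ((n:ℝ)+1)
    exact ((h1.eventually (eventually_lt_nhds hε)).exists)
  refine ⟨min k₀ (-(j:ℤ)), min_le_left _ _, ?_⟩
  set k := min k₀ (-(j:ℤ)) with hk
  intro y hy
  have hxm := self_mem k x
  have hbound : ∀ i, |y i - x i| < 2 ^ k := by
    intro i
    obtain ⟨a1, a2⟩ := hy i
    obtain ⟨b1, b2⟩ := hxm i
    rw [abs_sub_lt_iff]
    constructor <;> nlinarith
  have hdist : dist y x ≤ (n : ℝ) * 2 ^ k + 2 ^ k := by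
    have h2k := two_zpow_pos k
    rcases Nat.eq_zero_or_pos n with h0 | hpos
    · subst h0
      have : dist y x = 0 := by
        rw [dist_eq_zero]
        ext i
        exact absurd i.2 (by simp)
      rw [this]; positivity
    have hd : dist y x ≤ Real.sqrt ((n : ℝ) * (2 ^ k) ^ 2) := by
      rw [EuclideanSpace.dist_eq]
      apply Real.sqrt_le_sqrt
      calc ∑ i, dist (y i) (x i) ^ 2 ≤ ∑ _i : Fin n, ((2:ℝ) ^ k) ^ 2 := by
            apply Finset.sum_le_sum
            intro i _
            have := (hbound i).le
            have h0 : dist (y i) (x i) = |y i - x i| := Real.dist_eq _ _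
            nlinarith [abs_nonneg (y i - x i)]
        _ = (n : ℝ) * (2 ^ k) ^ 2 := by simp [Finset.sum_const, mul_comm]
    calc dist y x ≤ Real.sqrt ((n : ℝ) * (2 ^ k) ^ 2) := hd
      _ ≤ Real.sqrt (((n:ℝ) * 2 ^ k + 2 ^ k) ^ 2) := by
          apply Real.sqrt_le_sqrt
          have hn1 : (1:ℝ) ≤ (n:ℝ) := by exact_mod_cast hpos
          nlinarith
      _ = (n : ℝ) * 2 ^ k + 2 ^ k := Real.sqrt_sq (by positivity)
  have hklej : k ≤ -(j:ℤ) := min_le_right _ _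
  have hmono : (2:ℝ) ^ k ≤ 2 ^ (-(j:ℤ)) := by
    apply zpow_le_zpow_right₀ (by norm_num) hklej
  rw [mem_ball]
  calc dist y x ≤ (n : ℝ) * 2 ^ k + 2 ^ k := hdist
    _ = ((n:ℝ) + 1) * 2 ^ k := by ring
    _ ≤ ((n:ℝ) + 1) * 2 ^ (-(j:ℤ)) := by
        apply mul_le_mul_of_nonneg_left hmono (by positivity)
    _ < ε := hj

end DC

namespace DC
variable {n : ℕ}

/-- weight of a cube -/
def w (n : ℕ) (s : ℤ × (Fin n → ℤ)) : ℝ≥0∞ := ENNReal.ofReal (((2 : ℝ) ^ s.1) ^ (n : ℝ))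

lemma w_eq_volume (s : ℤ × (Fin n → ℤ)) : w n s = volume (dyadicCube n s.1 s.2) :=
  (volume_cube s.1 s.2).symm

lemma volume_le_dyadicContent (E : Set (En n)) : volume E ≤ dyadicContent n n E := by
  apply le_iInf; intro c; apply le_iInf; intro hc
  calc volume E ≤ volume (⋃ i, dyadicCube n (c i).1 (c i).2) :=
        measure_mono (hc.trans interior_subset)
    _ ≤ ∑' i, volume (dyadicCube n (c i).1 (c i).2) := measure_iUnion_le _
    _ = ∑' i, ENNReal.ofReal (((2 : ℝ) ^ (c i).1) ^ ((n:ℕ) : ℝ)) := by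
        simp only [volume_cube]

/-- the union of dyadic cubes of scale `k` contained in `U` -/
def V (n : ℕ) (U : Set (En n)) (k : ℤ) : Set (En n) :=
  ⋃ (m : Fin n → ℤ) (_ : dyadicCube n k m ⊆ U), dyadicCube n k m

lemma V_antitone (U : Set (En n)) : Antitone (V n U) := by
  apply antitone_int_of_succ_le
  intro k x hx
  simp only [V, mem_iUnion] at hx ⊢
  obtain ⟨m, hm, hxm⟩ := hx
  refine ⟨mOf k x, ?_, self_mem k x⟩
  refine (subset_of_inter (by omega) ⟨x, self_mem k x, hxm⟩).trans hm

def Vtr (n : ℕ) (U : Set (En n)) (k : ℤ) : Set (En n) := if k ≤ 0 then V n U k else ∅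

/-- the Whitney family of `U` -/
def S (n : ℕ) (U : Set (En n)) : Set (ℤ × (Fin n → ℤ)) :=
  {s | s.1 ≤ 0 ∧ dyadicCube n s.1 s.2 ⊆ U ∧ ¬ dyadicCube n s.1 s.2 ⊆ Vtr n U (s.1 + 1)}

lemma S_disjoint (U : Set (En n)) :
    (S n U).PairwiseDisjoint (fun s => dyadicCube n s.1 s.2) := by
  have key : ∀ s ∈ S n U, ∀ s' ∈ S n U, s.1 < s'.1 →
      dyadicCube n s.1 s.2 ∩ dyadicCube n s'.1 s'.2 = ∅ := by
    rintro ⟨k, m⟩ ⟨hk0, hkU, hkV⟩ ⟨k', m'⟩ ⟨hk0', hkU', _⟩ hlt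
    by_contra hne
    have hsub : dyadicCube n k m ⊆ dyadicCube n k' m' :=
      subset_of_inter hlt.le (nonempty_iff_ne_empty.2 hne)
    apply hkV
    have h1 : dyadicCube n k' m' ⊆ V n U k' := by
      intro z hz
      exact mem_iUnion.2 ⟨m', mem_iUnion.2 ⟨hkU', hz⟩⟩
    have h2 : V n U k' ⊆ V n U (k + 1) := V_antitone U (by omega)
    have h3 : Vtr n U (k + 1) = V n U (k + 1) := if_pos (by omega)
    rw [h3]
    exact hsub.trans (h1.trans h2)
  intro s hs s' hs' hne
  rcases lt_trichotomy s.1 s'.1 with h | h | h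
  · exact Set.disjoint_iff_inter_eq_empty.2 (key s hs s' hs' h)
  · -- same scale
    apply Set.disjoint_left.2
    intro x hx hx'
    apply hne
    have := eq_mOf_of_mem hx
    have := eq_mOf_of_mem hx'
    have : s.2 = s'.2 := by rw [eq_mOf_of_mem hx, h, eq_mOf_of_mem hx']
    exact Prod.ext h this
  · exact (Set.disjoint_iff_inter_eq_empty.2 (key s' hs' s hs h)).symm

lemma S_covers {U : Set (En n)} (hU : IsOpen U) :
    U = ⋃ (s : S n U), dyadicCube n (s.1).1 (s.1).2 := by
  apply Subset.antisymm
  · intro x hx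
    obtain ⟨ε, hε, hball⟩ := Metric.isOpen_iff.1 hU x hx
    obtain ⟨k, hk0, hcube⟩ := cube_subset_ball hε 0
    have hmem : ∃ j : ℕ, x ∈ V n U (-(j:ℤ)) := by
      refine ⟨(-k).toNat, ?_⟩
      have : (-((-k).toNat : ℤ)) = k := by omega
      rw [this]
      exact mem_iUnion.2 ⟨mOf k x, mem_iUnion.2 ⟨hcube.trans hball, self_mem k x⟩⟩
    classical
    let j₀ := Nat.find hmem
    have hj₀ : x ∈ V n U (-(j₀:ℤ)) := Nat.find_spec hmem
    obtain ⟨m, hmU, hxm⟩ : ∃ m, dyadicCube n (-(j₀:ℤ)) m ⊆ U ∧ x ∈ dyadicCube n (-(j₀:ℤ)) m := by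
      obtain ⟨m, hm, hxm⟩ := by simpa only [V, mem_iUnion] using hj₀
      exact ⟨m, hm, hxm⟩
    refine mem_iUnion.2 ⟨⟨(-(j₀:ℤ), m), ?_⟩, hxm⟩
    refine ⟨by omega, hmU, ?_⟩
    intro hsub
    have hx' := hsub hxm
    rcases Nat.eq_zero_or_pos j₀ with h0 | hpos
    · rw [h0] at hx'
      simp only [Vtr] at hx'
      norm_num at hx'
    · have h1 : (-(j₀:ℤ) + 1) = -(((j₀ - 1 : ℕ)):ℤ) := by omega
      have h2 : Vtr n U (-(j₀:ℤ) + 1) = V n U (-((j₀-1:ℕ):ℤ)) := by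
        rw [Vtr, if_pos (by omega), h1]
      rw [h2] at hx'
      exact Nat.find_min hmem (by omega : j₀ - 1 < j₀) hx'
  · intro x hx
    obtain ⟨⟨s, hs⟩, hxs⟩ := mem_iUnion.1 hx
    exact hs.2.1 hxs

lemma sum_S_le {U : Set (En n)} (hU : IsOpen U) :
    ∑' (s : S n U), w n s.1 ≤ volume U := by
  have : ∑' (s : S n U), w n s.1 = ∑' (s : S n U), volume (dyadicCube n (s.1).1 (s.1).2) := by
    congr 1; funext s; exact w_eq_volume s.1
  rw [this]
  rw [← measure_iUnion ?_ (fun s => measurableSet_cube _ _)]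
  · exact measure_mono (by rw [← S_covers hU])
  · intro a b hab
    exact S_disjoint U a.2 b.2 (Subtype.coe_ne_coe.2 hab)

end DC

namespace DC
variable {n : ℕ}

lemma junk_sum (N : ℕ) :
    ∑' i : ℕ, ENNReal.ofReal ((2:ℝ) ^ (-(i:ℤ) - N)) = ENNReal.ofReal ((2:ℝ) ^ (-(N:ℤ))) * 2 := by
  have h : ∀ i : ℕ, ENNReal.ofReal ((2:ℝ) ^ (-(i:ℤ) - N))
      = ENNReal.ofReal ((2:ℝ) ^ (-(N:ℤ))) * (ENNReal.ofReal 2⁻¹) ^ i := by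
    intro i
    rw [← ENNReal.ofReal_pow (by norm_num), ← ENNReal.ofReal_mul (by positivity)]
    congr 1
    have : (2⁻¹:ℝ) ^ i = (2:ℝ) ^ (-(i:ℤ)) := by
      rw [zpow_neg, zpow_natCast, inv_pow]
    rw [this, ← zpow_add₀ (two_ne_zero : (2:ℝ) ≠ 0)]
    congr 1; omega
  simp only [h]
  rw [ENNReal.tsum_mul_left, ENNReal.tsum_geometric]
  congr 1
  have : ENNReal.ofReal (2⁻¹:ℝ) = 2⁻¹ := by
    rw [ENNReal.ofReal_inv_of_pos two_pos, ENNReal.ofReal_ofNat]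
  rw [this, ENNReal.one_sub_inv_two, inv_inv]

lemma dyadicContent_le_open (hn : 1 ≤ n) {E U : Set (En n)} (hEU : E ⊆ U) (hU : IsOpen U)
    (N : ℕ) :
    dyadicContent n n E ≤ volume U + ENNReal.ofReal ((2:ℝ) ^ (-(N:ℤ))) * 2 := by
  classical
  haveI : Infinite (ℤ × (Fin n → ℤ)) := Prod.infinite_of_left
  obtain ⟨den⟩ := nonempty_denumerable (ℤ × (Fin n → ℤ))
  let e : ℕ ≃ (ℤ × (Fin n → ℤ)) := (@Denumerable.eqv _ den).symm
  set c : ℕ → ℤ × (Fin n → ℤ) :=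
    fun i => if e i ∈ S n U then e i else (-(i:ℤ) - N, fun _ => 0) with hc
  have hcover : E ⊆ interior (⋃ i, dyadicCube n (c i).1 (c i).2) := by
    have hUsub : U ⊆ ⋃ i, dyadicCube n (c i).1 (c i).2 := by
      intro x hx
      rw [S_covers hU] at hx
      obtain ⟨⟨s, hs⟩, hxs⟩ := mem_iUnion.1 hx
      refine mem_iUnion.2 ⟨e.symm s, ?_⟩
      have : c (e.symm s) = s := by
        rw [hc]
        simp only [Equiv.apply_symm_apply, if_pos hs]
      rw [this]; exact hxs
    exact fun x hx => (hU.subset_interior_iff.2 hUsub) (hEU hx)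
  calc dyadicContent n n E ≤ ∑' i, ENNReal.ofReal (((2 : ℝ) ^ (c i).1) ^ ((n:ℕ) : ℝ)) :=
        iInf_le_of_le c (iInf_le_of_le hcover le_rfl)
    _ ≤ ∑' i, ((if e i ∈ S n U then w n (e i) else 0) + ENNReal.ofReal ((2:ℝ) ^ (-(i:ℤ) - N))) := by
        apply ENNReal.tsum_le_tsum
        intro i
        by_cases hi : e i ∈ S n U
        · rw [hc]
          simp only [if_pos hi]
          exact le_add_right le_rfl
        · rw [hc]
          simp only [if_neg hi]
          apply le_add_left
          apply ENNReal.ofReal_le_ofReal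
          calc ((2:ℝ) ^ (-(i:ℤ) - N)) ^ ((n:ℕ) : ℝ)
              ≤ ((2:ℝ) ^ (-(i:ℤ) - N)) ^ (1 : ℝ) := by
                apply Real.rpow_le_rpow_of_exponent_ge (two_zpow_pos _)
                  (zpow_le_one_of_nonpos₀ one_le_two (by omega))
                exact_mod_cast hn
            _ = (2:ℝ) ^ (-(i:ℤ) - N) := Real.rpow_one _
    _ = (∑' i : ℕ, (if e i ∈ S n U then w n (e i) else 0)) +
        ∑' i : ℕ, ENNReal.ofReal ((2:ℝ) ^ (-(i:ℤ) - N)) := ENNReal.tsum_add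
    _ ≤ volume U + ENNReal.ofReal ((2:ℝ) ^ (-(N:ℤ))) * 2 := by
        apply add_le_add
        · have h1 : ∑' i, (if e i ∈ S n U then w n (e i) else 0)
              = ∑' s : ℤ × (Fin n → ℤ), (if s ∈ S n U then w n s else 0) :=
            e.tsum_eq (fun s => if s ∈ S n U then w n s else 0)
          have h2 : ∑' s : ℤ × (Fin n → ℤ), (if s ∈ S n U then w n s else 0)
              = ∑' (s : S n U), w n s.1 := by
            rw [tsum_subtype (S n U) (w n)]
            exact tsum_congr fun s => by rw [Set.indicator_apply]
          rw [h1, h2]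
          exact sum_S_le hU
        · rw [junk_sum]

lemma dyadicContent_eq_volume (hn : 1 ≤ n) (E : Set (En n)) :
    dyadicContent n n E = volume E := by
  refine le_antisymm ?_ (volume_le_dyadicContent E)
  have step : ∀ U : Set (En n), E ⊆ U → IsOpen U → dyadicContent n n E ≤ volume U := by
    intro U hEU hU
    apply ENNReal.le_of_forall_pos_le_add
    intro ε hε _
    obtain ⟨N, hN⟩ : ∃ N : ℕ, (2:ℝ) ^ (-(N:ℤ)) * 2 < (ε:ℝ) := by
      have h1 : Tendsto (fun N : ℕ => (2:ℝ) ^ (-(N:ℤ)) * 2) atTop (𝓝 0) := by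
        have h2 : Tendsto (fun N : ℕ => ((1:ℝ)/2) ^ N) atTop (𝓝 0) :=
          tendsto_pow_atTop_nhds_zero_of_lt_one (by norm_num) (by norm_num)
        have h3 : (fun N : ℕ => (2:ℝ) ^ (-(N:ℤ)) * 2) = fun N : ℕ => ((1:ℝ)/2) ^ N * 2 := by
          funext N
          rw [zpow_neg, zpow_natCast]
          rw [one_div, inv_pow]
        rw [h3]
        simpa using h2.mul_const 2
      exact (h1.eventually (eventually_lt_nhds (by exact_mod_cast hε))).exists
    calc dyadicContent n n E ≤ volume U + ENNReal.ofReal ((2:ℝ) ^ (-(N:ℤ))) * 2 :=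
          dyadicContent_le_open hn hEU hU N
      _ ≤ volume U + ε := by
          apply add_le_add le_rfl
          calc ENNReal.ofReal ((2:ℝ) ^ (-(N:ℤ))) * 2
              = ENNReal.ofReal ((2:ℝ) ^ (-(N:ℤ)) * 2) := by
                rw [ENNReal.ofReal_mul (two_zpow_pos _).le, ENNReal.ofReal_ofNat]
            _ ≤ ENNReal.ofReal (ε:ℝ) := ENNReal.ofReal_le_ofReal hN.le
            _ = (ε : ℝ≥0∞) := ENNReal.ofReal_coe_nnreal
  rw [Set.measure_eq_iInf_isOpen]
  simp only [le_iInf_iff]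
  intro U hEU hU
  exact step U hEU hU

end DC

namespace DC
variable {n : ℕ}

lemma choquet_eq_volume_integral (hn : 1 ≤ n) (Ω : Set (En n)) (f : En n → ℝ≥0∞) :
    choquetIntegral n n Ω f
      = ∫⁻ t in Ioi (0:ℝ), volume {x | x ∈ Ω ∧ ENNReal.ofReal t < f x} := by
  unfold choquetIntegral
  exact lintegral_congr fun t => dyadicContent_eq_volume hn _

lemma slice_volume_eq (g : En n → ℝ≥0∞) (x : En n) :
    volume ({t : ℝ | ENNReal.ofReal t < g x} ∩ Ioi 0) = g x := by
  rcases eq_or_ne (g x) ∞ with h | h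
  · have : {t : ℝ | ENNReal.ofReal t < g x} ∩ Ioi 0 = Ioi 0 := by
      ext t; simp [h, ENNReal.ofReal_lt_top]
    rw [this, h]
    simp [Real.volume_Ioi]
  · have : {t : ℝ | ENNReal.ofReal t < g x} ∩ Ioi 0 = Ioo 0 ((g x).toReal) := by
      ext t
      simp only [mem_inter_iff, mem_setOf_eq, mem_Ioi, mem_Ioo]
      constructor
      · rintro ⟨h1, h2⟩
        exact ⟨h2, (ENNReal.ofReal_lt_iff_lt_toReal h2.le h).1 h1⟩
      · rintro ⟨h1, h2⟩
        exact ⟨(ENNReal.ofReal_lt_iff_lt_toReal h1.le h).2 h2, h1⟩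
    rw [this, Real.volume_Ioo, sub_zero, ENNReal.ofReal_toReal h]

lemma layercake (hn : 1 ≤ n) {S : Set (En n)} (hS : MeasurableSet S)
    {g : En n → ℝ≥0∞} (hg : Measurable g) :
    choquetIntegral n n S g = ∫⁻ x in S, g x ∂volume := by
  rw [choquet_eq_volume_integral hn]
  set A : Set (En n × ℝ) := {p | ENNReal.ofReal p.2 < g p.1} with hA
  have hAm : MeasurableSet A := by
    apply measurableSet_lt
    · exact ENNReal.measurable_ofReal.comp measurable_snd
    · exact hg.comp measurable_fst
  have swap := lintegral_lintegral_swap (μ := volume.restrict S)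
    (ν := volume.restrict (Ioi (0:ℝ)))
    (f := fun x t => A.indicator (fun _ => (1:ℝ≥0∞)) (x, t)) ?_
  · have lhs_eq : ∫⁻ x in S, (∫⁻ t in Ioi (0:ℝ), A.indicator (fun _ => (1:ℝ≥0∞)) (x, t))
        = ∫⁻ x in S, g x ∂volume := by
      apply lintegral_congr
      intro x
      have h1 : (fun t => A.indicator (fun _ => (1:ℝ≥0∞)) (x, t))
          = {t : ℝ | ENNReal.ofReal t < g x}.indicator (fun _ => (1:ℝ≥0∞)) := by
        funext t
        simp only [Set.indicator_apply, hA, mem_setOf_eq]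
      rw [h1]
      have h2 : MeasurableSet {t : ℝ | ENNReal.ofReal t < g x} :=
        measurableSet_lt ENNReal.measurable_ofReal measurable_const
      rw [lintegral_indicator h2, setLIntegral_one,
        Measure.restrict_apply h2, slice_volume_eq]
    have rhs_eq : ∫⁻ t in Ioi (0:ℝ), (∫⁻ x in S, A.indicator (fun _ => (1:ℝ≥0∞)) (x, t))
        = ∫⁻ t in Ioi (0:ℝ), volume {x | x ∈ S ∧ ENNReal.ofReal t < g x} := by
      apply lintegral_congr
      intro t
      have h1 : (fun x => A.indicator (fun _ => (1:ℝ≥0∞)) (x, t))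
          = {x : En n | ENNReal.ofReal t < g x}.indicator (fun _ => (1:ℝ≥0∞)) := by
        funext x
        simp only [Set.indicator_apply, hA, mem_setOf_eq]
      have h2 : MeasurableSet {x : En n | ENNReal.ofReal t < g x} :=
        measurableSet_lt measurable_const hg
      rw [h1, lintegral_indicator h2, setLIntegral_one, Measure.restrict_apply h2]
      congr 1
      ext x
      simp only [mem_inter_iff, mem_setOf_eq]
      exact and_comm
    rw [← lhs_eq, swap, rhs_eq]
  · apply Measurable.aemeasurable
    exact (measurable_one.indicator hAm)
end DC

namespace DC
variable {n : ℕ}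

section Envelope
variable (f : En n → ℝ≥0∞)

/-- monotone measurable hulls of the superlevel sets of `f` -/
def G (q : ℚ) : Set (En n) :=
  ⋂ (p : ℚ) (_ : 0 < p ∧ p ≤ q), toMeasurable volume {y | ENNReal.ofReal (p:ℝ) < f y}

lemma G_measurable (q : ℚ) : MeasurableSet (G f q) := by
  apply MeasurableSet.iInter
  intro p
  apply MeasurableSet.iInter
  intro _
  exact measurableSet_toMeasurable _ _

lemma G_antitone {q q' : ℚ} (h : q ≤ q') : G f q' ⊆ G f q := by
  apply Set.iInter₂_mono'
  intro p hp
  exact ⟨p, ⟨hp.1, hp.2.trans h⟩, Subset.rfl⟩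

lemma superlevel_subset_G {q : ℚ} (hq : 0 < q) : {y | ENNReal.ofReal (q:ℝ) < f y} ⊆ G f q := by
  intro y hy
  apply Set.mem_iInter₂.2
  intro p hp
  apply subset_toMeasurable
  exact lt_of_le_of_lt (ENNReal.ofReal_le_ofReal (by exact_mod_cast hp.2)) hy

/-- the measurable envelope of `f` -/
def env : En n → ℝ≥0∞ := fun x =>
  ⨆ q : ℚ, (if 0 < q then (G f q).indicator (fun _ => ENNReal.ofReal (q:ℝ)) x else 0)

lemma env_measurable : Measurable (env f) := by
  apply Measurable.iSup
  intro q
  by_cases hq : 0 < q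
  · simp only [if_pos hq]
    exact (measurable_const.indicator (G_measurable f q))
  · simp only [if_neg hq]
    exact measurable_const

lemma superlevel_subset_env {t : ℝ} (ht : 0 < t) :
    {x | ENNReal.ofReal t < f x} ⊆ {x | ENNReal.ofReal t < env f x} := by
  intro x hx
  simp only [mem_setOf_eq] at hx ⊢
  obtain ⟨q, hq1, hq2⟩ : ∃ q : ℚ, t < (q:ℝ) ∧ ENNReal.ofReal (q:ℝ) < f x := by
    rcases eq_or_ne (f x) ∞ with h | h
    · obtain ⟨q, hq⟩ := exists_rat_gt t
      exact ⟨q, hq, h ▸ ENNReal.ofReal_lt_top⟩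
    · have h1 : t < (f x).toReal := by
        rw [← ENNReal.ofReal_lt_iff_lt_toReal ht.le h]
        exact hx
      obtain ⟨q, hq1, hq2⟩ := exists_rat_btwn h1
      refine ⟨q, hq1, ?_⟩
      rw [ENNReal.ofReal_lt_iff_lt_toReal (lt_trans ht hq1).le h]
      exact hq2
  have hq0 : 0 < q := by exact_mod_cast lt_trans ht hq1
  have hxG : x ∈ G f q := superlevel_subset_G f hq0 hq2
  calc ENNReal.ofReal t < ENNReal.ofReal (q:ℝ) := by
        exact ENNReal.ofReal_lt_ofReal_iff_of_nonneg ht.le |>.2 hq1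
    _ ≤ env f x := by
        apply le_iSup_of_le q
        rw [if_pos hq0, Set.indicator_of_mem hxG]

lemma env_superlevel_subset {t : ℝ} (ht : 0 < t) :
    {x | ENNReal.ofReal t < env f x} ⊆ ⋃ (q : {q : ℚ // t < (q:ℝ)}), G f q.1 := by
  intro x hx
  simp only [mem_setOf_eq] at hx
  have : ∃ q : ℚ, (if 0 < q then (G f q).indicator (fun _ => ENNReal.ofReal (q:ℝ)) x else 0)
      > ENNReal.ofReal t := by
    by_contra h
    push_neg at h
    exact absurd (iSup_le h) (not_le.2 hx)
  obtain ⟨q, hq⟩ := this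
  by_cases h0 : 0 < q
  · rw [if_pos h0] at hq
    by_cases hmem : x ∈ G f q
    · rw [Set.indicator_of_mem hmem] at hq
      have htq : t < (q:ℝ) := by
        by_contra hle
        push_neg at hle
        exact absurd (ENNReal.ofReal_le_ofReal hle) (not_le.2 hq)
      exact mem_iUnion.2 ⟨⟨q, htq⟩, hmem⟩
    · rw [Set.indicator_of_notMem hmem] at hq
      exact absurd hq (by simp)
  · rw [if_neg h0] at hq
    exact absurd hq (by simp)

lemma env_key {t : ℝ} (ht : 0 < t) {S : Set (En n)} (hS : MeasurableSet S) :
    volume ({x | ENNReal.ofReal t < env f x} ∩ S)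
      = volume ({x | ENNReal.ofReal t < f x} ∩ S) := by
  apply le_antisymm
  · calc volume ({x | ENNReal.ofReal t < env f x} ∩ S)
        ≤ volume ((⋃ (q : {q : ℚ // t < (q:ℝ)}), G f q.1) ∩ S) :=
          measure_mono (inter_subset_inter_left S (env_superlevel_subset f ht))
      _ = volume (⋃ (q : {q : ℚ // t < (q:ℝ)}), (G f q.1 ∩ S)) := by rw [iUnion_inter]
      _ ≤ ⨆ (q : {q : ℚ // t < (q:ℝ)}), volume (G f q.1 ∩ S) := by
          apply Directed.measure_iUnion ?_ |>.le
          -- directedness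
          intro q q'
          refine ⟨⟨min q.1 q'.1, by push_cast [lt_min_iff]; exact ⟨q.2, q'.2⟩⟩, ?_, ?_⟩
          · exact inter_subset_inter_left S (G_antitone f (min_le_left _ _))
          · exact inter_subset_inter_left S (G_antitone f (min_le_right _ _))
      _ ≤ volume ({x | ENNReal.ofReal t < f x} ∩ S) := by
          apply iSup_le
          rintro ⟨q, hq⟩
          have hq0 : 0 < q := by exact_mod_cast lt_trans ht hq
          calc volume (G f q ∩ S)
              ≤ volume (toMeasurable volume {y | ENNReal.ofReal (q:ℝ) < f y} ∩ S) := by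
                apply measure_mono
                apply inter_subset_inter_left
                apply Set.iInter₂_subset q ⟨hq0, le_refl q⟩
            _ = volume ({y | ENNReal.ofReal (q:ℝ) < f y} ∩ S) :=
                Measure.measure_toMeasurable_inter_of_sFinite hS _
            _ ≤ volume ({x | ENNReal.ofReal t < f x} ∩ S) := by
                apply measure_mono
                apply inter_subset_inter_left
                intro y hy
                exact lt_of_le_of_lt (ENNReal.ofReal_le_ofReal hq.le) hy
  · apply measure_mono
    exact inter_subset_inter_left S (superlevel_subset_env f ht)

end Envelope
end DC

namespace DC
variable {n : ℕ}

lemma ball_ae_closedBall (hn : 1 ≤ n) (x : En n) (r : ℝ) :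
    (ball x r : Set (En n)) =ᵐ[volume] closedBall x r := by
  haveI : Nontrivial (En n) := by
    have : 0 < Module.finrank ℝ (En n) := by simp [finrank_euclideanSpace_fin]; omega
    exact Module.nontrivial_of_finrank_pos (R := ℝ) this
  have hsph : volume (sphere x r : Set (En n)) = 0 := Measure.addHaar_sphere volume x r
  rw [Filter.eventuallyEq_set]
  filter_upwards [measure_eq_zero_iff_ae_notMem.1 hsph] with y hy
  simp only [mem_ball, mem_closedBall]
  constructor
  · exact le_of_lt
  · intro h
    rcases h.lt_or_eq with h' | h'
    · exact h'
    · exact absurd (mem_sphere.2 h') hy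

lemma ae_tendsto_ball_avg (hn : 1 ≤ n) {g : En n → ℝ≥0∞} (hg : Measurable g)
    (hloc : ∀ (x : En n) (r : ℝ), 0 < r → (∫⁻ y in ball x r, g y ∂volume) < ⊤) :
    ∀ᵐ x ∂(volume : Measure (En n)),
      Tendsto (fun r : ℝ => (∫⁻ y in ball x r, g y ∂volume) / volume (ball x r))
        (𝓝[>] (0:ℝ)) (𝓝 (g x)) := by
  have main : ∀ R : ℕ, ∀ᵐ x ∂(volume : Measure (En n)),
      Tendsto (fun r : ℝ =>
          (∫⁻ y in closedBall x r, (ball (0:En n) (R+1)).indicator g y ∂volume) /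
            volume (closedBall x r))
        (𝓝[>] (0:ℝ)) (𝓝 ((ball (0:En n) (R+1)).indicator g x)) := by
    intro R
    have hfin : (∫⁻ y, (ball (0:En n) (R+1)).indicator g y ∂volume) ≠ ∞ := by
      rw [lintegral_indicator measurableSet_ball]
      exact (hloc 0 (R+1) (by positivity)).ne
    have hmb : Measurable ((ball (0:En n) (R+1)).indicator g) :=
      hg.indicator measurableSet_ball
    filter_upwards [(Besicovitch.vitaliFamily (volume : Measure (En n))).ae_tendsto_lintegral_div'
      hmb hfin] with x hx
    exact hx.comp (Besicovitch.tendsto_filterAt volume x)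
  rw [← ae_all_iff] at main
  filter_upwards [main] with x hx
  set R : ℕ := ⌈‖x‖⌉₊ with hR
  have hxR : ‖x‖ < (R:ℝ) + 1 := lt_of_le_of_lt (Nat.le_ceil _) (by exact_mod_cast lt_add_one (R:ℝ))
  have hev : ∀ᶠ r in 𝓝[>] (0:ℝ),
      (∫⁻ y in closedBall x r, (ball (0:En n) (R+1)).indicator g y ∂volume) /
          volume (closedBall x r)
        = (∫⁻ y in ball x r, g y ∂volume) / volume (ball x r) := by
    have hpos : (0:ℝ) < ((R:ℝ) + 1) - ‖x‖ := by linarith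
    filter_upwards [Ioo_mem_nhdsGT_of_mem ⟨le_refl (0:ℝ), hpos⟩] with r hr
    have hsub : closedBall x r ⊆ ball (0:En n) (R+1) := by
      intro y hy
      rw [mem_ball, dist_zero_right]
      calc ‖y‖ = dist y 0 := (dist_zero_right y).symm
        _ ≤ dist y x + dist x 0 := dist_triangle _ _ _
        _ ≤ r + ‖x‖ := add_le_add (mem_closedBall.1 hy) (le_of_eq (dist_zero_right x))
        _ < (R:ℝ) + 1 := by have := hr.2; linarith
    have h1 : (∫⁻ y in closedBall x r, (ball (0:En n) (R+1)).indicator g y ∂volume)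
        = ∫⁻ y in closedBall x r, g y ∂volume := by
      apply setLIntegral_congr_fun measurableSet_closedBall
      exact fun y hy => Set.indicator_of_mem (hsub hy) g
    have h2 : (∫⁻ y in closedBall x r, g y ∂volume) = ∫⁻ y in ball x r, g y ∂volume :=
      (setLIntegral_congr (ball_ae_closedBall hn x r)).symm
    have h3 : volume (closedBall x r : Set (En n)) = volume (ball x r) :=
      (measure_congr (ball_ae_closedBall hn x r)).symm
    rw [h1, h2, h3]
  have hxmem : x ∈ ball (0:En n) (R+1) := by
    rw [mem_ball, dist_zero_right]; exact hxR
  have := (hx R).congr' hev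
  rwa [Set.indicator_of_mem hxmem g] at this

end DC

namespace DC
variable {n : ℕ}

lemma set_shape (Ω : Set (En n)) (h : En n → ℝ≥0∞) (t : ℝ) :
    {x | x ∈ Ω ∧ ENNReal.ofReal t < h x} = {x | ENNReal.ofReal t < h x} ∩ Ω := by
  ext x; simp only [mem_setOf_eq, mem_inter_iff]; exact and_comm

lemma choquet_env_eq (hn : 1 ≤ n) (f : En n → ℝ≥0∞) {Ω : Set (En n)} (hΩ : MeasurableSet Ω) :
    choquetIntegral n n Ω f = choquetIntegral n n Ω (env f) := by
  rw [choquet_eq_volume_integral hn, choquet_eq_volume_integral hn]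
  apply lintegral_congr_ae
  rw [Filter.EventuallyEq, ae_restrict_iff' measurableSet_Ioi]
  apply ae_of_all
  intro t ht
  rw [set_shape, set_shape]
  exact (env_key f ht hΩ).symm

lemma choquet_ae_congr (hn : 1 ≤ n) {f f' : En n → ℝ≥0∞} (h : f =ᵐ[volume] f')
    (Ω : Set (En n)) : choquetIntegral n n Ω f = choquetIntegral n n Ω f' := by
  rw [choquet_eq_volume_integral hn, choquet_eq_volume_integral hn]
  apply lintegral_congr_ae
  rw [Filter.EventuallyEq, ae_restrict_iff' measurableSet_Ioi]
  apply ae_of_all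
  intro t _
  set N := {x | f x ≠ f' x} with hN
  have hNnull : volume N = 0 := h
  apply le_antisymm
  · calc volume {x | x ∈ Ω ∧ ENNReal.ofReal t < f x}
        ≤ volume ({x | x ∈ Ω ∧ ENNReal.ofReal t < f' x} ∪ N) := by
          apply measure_mono
          intro x ⟨hx1, hx2⟩
          by_cases hxN : x ∈ N
          · exact Or.inr hxN
          · simp only [hN, mem_setOf_eq, not_not] at hxN
            exact Or.inl ⟨hx1, hxN ▸ hx2⟩
      _ ≤ volume {x | x ∈ Ω ∧ ENNReal.ofReal t < f' x} + volume N := measure_union_le _ _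
      _ = volume {x | x ∈ Ω ∧ ENNReal.ofReal t < f' x} := by rw [hNnull, add_zero]
  · calc volume {x | x ∈ Ω ∧ ENNReal.ofReal t < f' x}
        ≤ volume ({x | x ∈ Ω ∧ ENNReal.ofReal t < f x} ∪ N) := by
          apply measure_mono
          intro x ⟨hx1, hx2⟩
          by_cases hxN : x ∈ N
          · exact Or.inr hxN
          · simp only [hN, mem_setOf_eq, not_not] at hxN
            exact Or.inl ⟨hx1, hxN ▸ hx2⟩
      _ ≤ volume {x | x ∈ Ω ∧ ENNReal.ofReal t < f x} + volume N := measure_union_le _ _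
      _ = volume {x | x ∈ Ω ∧ ENNReal.ofReal t < f x} := by rw [hNnull, add_zero]

end DC

/-- a nonnegative function with finite Choquet integral over every open
ball is Lebesgue measurable if and only if it coincides `H̃^n_∞`-almost everywhere with
the limsup of its `n`-dimensional ball averages. -/
theorem lebesgue_measurable_iff_limsup_avg (n : ℕ) (hn : 1 ≤ n) (f : En n → ℝ≥0∞)
    (hf : ∀ (x : En n) (r : ℝ), 0 < r → choquetIntegral n (n : ℝ) (ball x r) f < ⊤) :
    NullMeasurable f (volume : Measure (En n)) ↔
      ∃ E : Set (En n), dyadicContent n (n : ℝ) E = 0 ∧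
        ∀ x ∉ E, f x = limsupAvg n (n : ℝ) f x := by
  constructor
  · intro h
    have hae : AEMeasurable f (volume : Measure (En n)) := h.aemeasurable
    set g := hae.mk f with hgdef
    have hg : Measurable g := hae.measurable_mk
    have hfg : f =ᵐ[volume] g := hae.ae_eq_mk
    have hch : ∀ Ω : Set (En n), choquetIntegral n n Ω f = choquetIntegral n n Ω g :=
      fun Ω => DC.choquet_ae_congr hn hfg Ω
    have hloc : ∀ (x : En n) (r : ℝ), 0 < r → (∫⁻ y in ball x r, g y ∂volume) < ⊤ := by
      intro x r hr
      rw [← DC.layercake hn measurableSet_ball hg, ← hch]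
      exact hf x r hr
    have hdiff := DC.ae_tendsto_ball_avg hn hg hloc
    have hBA : ∀ (x : En n) (r : ℝ), ballAvg n n f x r
        = (∫⁻ y in ball x r, g y ∂volume) / volume (ball x r) := by
      intro x r
      rw [ballAvg, hch, DC.layercake hn measurableSet_ball hg,
        DC.dyadicContent_eq_volume hn]
    set B := {x : En n | ¬ Tendsto (fun r : ℝ =>
        (∫⁻ y in ball x r, g y ∂volume) / volume (ball x r)) (𝓝[>] (0:ℝ)) (𝓝 (g x))} with hB
    have hBnull : volume B = 0 := hdiff
    refine ⟨B ∪ {x | f x ≠ g x}, ?_, ?_⟩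
    · rw [DC.dyadicContent_eq_volume hn]
      exact measure_union_null hBnull hfg
    · intro x hx
      simp only [mem_union, not_or] at hx
      obtain ⟨hx1, hx2⟩ := hx
      have hten : Tendsto (fun r : ℝ =>
          (∫⁻ y in ball x r, g y ∂volume) / volume (ball x r)) (𝓝[>] (0:ℝ)) (𝓝 (g x)) := by
        by_contra hcon
        exact hx1 hcon
      have hfx : f x = g x := by simpa [not_not] using hx2
      rw [hfx, limsupAvg]
      have : (fun r : ℝ => ballAvg n n f x r)
          = fun r : ℝ => (∫⁻ y in ball x r, g y ∂volume) / volume (ball x r) :=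
        funext fun r => hBA x r
      rw [this]
      exact (hten.limsup_eq).symm
  · rintro ⟨E, hE0, hEeq⟩
    set g := DC.env f with hgdef
    have hg : Measurable g := DC.env_measurable f
    have hch : ∀ (x : En n) (r : ℝ),
        choquetIntegral n n (ball x r) f = choquetIntegral n n (ball x r) g :=
      fun x r => DC.choquet_env_eq hn f measurableSet_ball
    have hloc : ∀ (x : En n) (r : ℝ), 0 < r → (∫⁻ y in ball x r, g y ∂volume) < ⊤ := by
      intro x r hr
      rw [← DC.layercake hn measurableSet_ball hg, ← hch]
      exact hf x r hr
    have hBA : ∀ (x : En n) (r : ℝ), ballAvg n n f x r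
        = (∫⁻ y in ball x r, g y ∂volume) / volume (ball x r) := by
      intro x r
      rw [ballAvg, hch, DC.layercake hn measurableSet_ball hg,
        DC.dyadicContent_eq_volume hn]
    have hdiff := DC.ae_tendsto_ball_avg hn hg hloc
    have hE : volume E = 0 := by rw [← DC.dyadicContent_eq_volume hn]; exact hE0
    have hfg : f =ᵐ[volume] g := by
      filter_upwards [hdiff, measure_eq_zero_iff_ae_notMem.1 hE] with x hx hxE
      rw [hEeq x hxE, limsupAvg]
      have : (fun r : ℝ => ballAvg n n f x r)
          = fun r : ℝ => (∫⁻ y in ball x r, g y ∂volume) / volume (ball x r) :=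
        funext fun r => hBA x r
      rw [this]
      exact hx.limsup_eq
    exact (hg.nullMeasurable).congr hfg.symm
end
end
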